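/- Let (Ω, 𝓕, P) be a probability space with a filtration (𝓕_j)_{j∈ℕ}, let n ≥ 1, let a_1,…,a_n be real numbers, and let ξ_1,…,ξ_n be square-integrable real random variables. Suppose there are positive integers m_1,…,m_n, pairwise distinct, such that for each i: (a) ξ_i is 𝓕_{m_i}-measurable, and (b) E[ξ_i | 𝓕_0] = E[ξ_i] almost surely. For j ≥ 1 write P_j Z = E[Z | 𝓕_j] − E[Z | 𝓕_{j−1}]. Suppose δ : ℕ → [0,∞) is summable and ‖P_j ξ_i‖_{L²} ≤ δ(m_i − j) for every i and every 1 ≤ j ≤ m_i. Then ‖ Σ_{i=1}^n a_i (ξ_i − E ξ_i) ‖_{L²} ≤ ( Σ_{i=1}^n a_i² )^{1/2} · Σ_{u=0}^∞ δ(u). -/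

import Mathlib

open MeasureTheory
open scoped BigOperators RealInnerProductSpace

section AuxLemmas

variable {Ω : Type*} {mΩ : MeasurableSpace Ω} {μ : Measure Ω} [IsProbabilityMeasure μ]

omit [IsProbabilityMeasure μ] in
lemma memL2_mul_integrable' {f g : Ω → ℝ} (hf : MemLp f 2 μ) (hg : MemLp g 2 μ) :
    Integrable (fun ω => f ω * g ω) μ := by
  have h := L2.integrable_inner (𝕜 := ℝ) (hf.toLp f) (hg.toLp g)
  refine h.congr ?_
  filter_upwards [hf.coeFn_toLp, hg.coeFn_toLp] with ω h1 h2
  simp [h1, h2, RCLike.inner_apply, mul_comm]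

omit [IsProbabilityMeasure μ] in
lemma inner_toLp_eq_integral' {f g : Ω → ℝ} (hf : MemLp f 2 μ) (hg : MemLp g 2 μ) :
    ⟪hf.toLp f, hg.toLp g⟫ = ∫ ω, f ω * g ω ∂μ := by
  rw [L2.inner_def]
  apply integral_congr_ae
  filter_upwards [hf.coeFn_toLp, hg.coeFn_toLp] with ω h1 h2
  simp [h1, h2, RCLike.inner_apply, mul_comm]

lemma orth_aux' (ℱ : Filtration ℕ mΩ) {g₁ g₂ : Ω → ℝ} {j k : ℕ} (hjk : j < k)
    (hX2 : MemLp (fun ω => (μ[g₁|ℱ j]) ω - (μ[g₁|ℱ (j-1)]) ω) 2 μ)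
    (hY2 : MemLp (fun ω => (μ[g₂|ℱ k]) ω - (μ[g₂|ℱ (k-1)]) ω) 2 μ) :
    ∫ ω, ((μ[g₁|ℱ j]) ω - (μ[g₁|ℱ (j-1)]) ω) * ((μ[g₂|ℱ k]) ω - (μ[g₂|ℱ (k-1)]) ω) ∂μ = 0 := by
  set X : Ω → ℝ := fun ω => (μ[g₁|ℱ j]) ω - (μ[g₁|ℱ (j-1)]) ω with hX
  set Y : Ω → ℝ := fun ω => (μ[g₂|ℱ k]) ω - (μ[g₂|ℱ (k-1)]) ω with hY
  have hXm : StronglyMeasurable[ℱ (k-1)] X :=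
    (stronglyMeasurable_condExp.mono (ℱ.mono (by omega))).sub
      (stronglyMeasurable_condExp.mono (ℱ.mono (by omega)))
  have hXYint : Integrable (fun ω => X ω * Y ω) μ := memL2_mul_integrable' hX2 hY2
  have hYint : Integrable Y μ := integrable_condExp.sub integrable_condExp
  have hY0 : μ[Y | ℱ (k-1)] =ᵐ[μ] 0 := by
    have hsub : μ[Y | ℱ (k-1)]
        =ᵐ[μ] μ[μ[g₂|ℱ k] | ℱ (k-1)] - μ[μ[g₂|ℱ (k-1)] | ℱ (k-1)] :=
      condExp_sub integrable_condExp integrable_condExp _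
    have e1 : μ[μ[g₂|ℱ k] | ℱ (k-1)] =ᵐ[μ] μ[g₂|ℱ (k-1)] :=
      condExp_condExp_of_le (ℱ.mono (Nat.sub_le k 1)) (ℱ.le k)
    have e2 : μ[μ[g₂|ℱ (k-1)] | ℱ (k-1)] = μ[g₂|ℱ (k-1)] :=
      condExp_of_stronglyMeasurable (ℱ.le _) stronglyMeasurable_condExp integrable_condExp
    filter_upwards [hsub, e1] with ω h1 h2
    simp only [h1, Pi.sub_apply, h2, e2, Pi.zero_apply, sub_self]
  have hmul : μ[fun ω => X ω * Y ω | ℱ (k-1)] =ᵐ[μ] fun ω => X ω * (μ[Y | ℱ (k-1)]) ω :=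
    condExp_mul_of_stronglyMeasurable_left (m := ℱ (k-1)) (μ := μ) hXm hXYint hYint
  calc ∫ ω, X ω * Y ω ∂μ = ∫ ω, (μ[fun ω => X ω * Y ω | ℱ (k-1)]) ω ∂μ :=
        (integral_condExp (ℱ.le _)).symm
    _ = 0 := by
        have h2 : (fun ω => X ω * (μ[Y | ℱ (k-1)]) ω) =ᵐ[μ] (fun _ => (0:ℝ)) := by
          filter_upwards [hY0] with ω h0
          simp only [Pi.zero_apply] at h0
          simp [h0]
        rw [integral_congr_ae (hmul.trans h2), integral_zero]

omit [IsProbabilityMeasure μ] in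
lemma Lp_coeFn_finset_sum' {ι : Type*} (s : Finset ι) (f : ι → Lp ℝ 2 μ) :
    ((∑ i ∈ s, f i : Lp ℝ 2 μ) : Ω → ℝ) =ᵐ[μ] fun ω => ∑ i ∈ s, (f i : Ω → ℝ) ω := by
  classical
  induction s using Finset.induction_on with
  | empty => simp only [Finset.sum_empty]; exact Lp.coeFn_zero (E := ℝ) (p := 2) (μ := μ)
  | insert _ _ hns ih =>
    rename_i a s
    rw [Finset.sum_insert hns]
    filter_upwards [Lp.coeFn_add (f a) (∑ i ∈ s, f i), ih] with ω h1 h2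
    simp only [h1, Pi.add_apply, h2, Finset.sum_insert hns]

end AuxLemmas

/-- Abstract form of Lemma B.2(ii): a weighted sum of centered random variables that are
measurable at (pairwise distinct) levels `m i` of a filtration, whose martingale-difference
projections at lag `u` are bounded in `L²` by `δ u`, satisfies
`‖Σ_i a_i (ξ_i − E ξ_i)‖_{L²} ≤ (Σ_i a_i²)^{1/2} · Σ_{u=0}^∞ δ(u)`. -/
theorem weighted_sum_L2_bound {Ω : Type*} {mΩ : MeasurableSpace Ω}
    {μ : Measure Ω} [IsProbabilityMeasure μ] (ℱ : Filtration ℕ mΩ)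
    (n : ℕ) (hn : 1 ≤ n) (a : Fin n → ℝ) (ξ : Fin n → Ω → ℝ)
    (hξ : ∀ i, MemLp (ξ i) 2 μ)
    (m : Fin n → ℕ) (hm : ∀ i, 1 ≤ m i) (hm_inj : Function.Injective m)
    (hmeas : ∀ i, StronglyMeasurable[ℱ (m i)] (ξ i))
    (hinit : ∀ i, μ[ξ i | ℱ 0] =ᵐ[μ] fun _ => ∫ ω, ξ i ω ∂μ)
    (δ : ℕ → ℝ) (hδ0 : ∀ u, 0 ≤ δ u) (hδsum : Summable δ)
    (hproj : ∀ i, ∀ j, 1 ≤ j → j ≤ m i →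
      eLpNorm (fun ω => (μ[ξ i | ℱ j]) ω - (μ[ξ i | ℱ (j - 1)]) ω) 2 μ
        ≤ ENNReal.ofReal (δ (m i - j))) :
    eLpNorm (fun ω => ∑ i, a i * (ξ i ω - ∫ ω', ξ i ω' ∂μ)) 2 μ ≤
      ENNReal.ofReal (Real.sqrt (∑ i, (a i) ^ 2) * ∑' u, δ u) := by
  classical
  set S : ℝ := ∑ i, (a i) ^ 2 with hS
  have hS0 : 0 ≤ S := Finset.sum_nonneg fun i _ => sq_nonneg _
  set M : ℕ := (Finset.univ : Finset (Fin n)).sup m with hM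
  have hmM : ∀ i, m i ≤ M := fun i => Finset.le_sup (Finset.mem_univ i)
  set P : Fin n → ℕ → Ω → ℝ :=
    fun i j ω => (μ[ξ i|ℱ j]) ω - (μ[ξ i|ℱ (j-1)]) ω with hPdef
  have hint : ∀ i, Integrable (ξ i) μ := fun i => (hξ i).integrable one_le_two
  have hP2 : ∀ i j, 1 ≤ j → j ≤ m i → MemLp (P i j) 2 μ := by
    intro i j h1 h2
    refine ⟨((stronglyMeasurable_condExp.mono (ℱ.le j)).aestronglyMeasurable).sub
      ((stronglyMeasurable_condExp.mono (ℱ.le (j-1))).aestronglyMeasurable), ?_⟩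
    exact lt_of_le_of_lt (hproj i j h1 h2) ENNReal.ofReal_lt_top
  -- the Lp-space elements at lag u
  set V : ℕ → Fin n → Lp ℝ 2 μ := fun u i =>
    if h : u < m i then
      a i • ((hP2 i (m i - u) (by omega) (by omega)).toLp (P i (m i - u)))
    else 0 with hVdef
  set g : ℕ → Ω → ℝ :=
    fun u ω => ∑ i, if u < m i then a i * P i (m i - u) ω else 0 with hgdef
  have hgV : ∀ u, g u =ᵐ[μ] ((∑ i, V u i : Lp ℝ 2 μ) : Ω → ℝ) := by
    intro u
    have h2 : ∀ i : Fin n,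
        (V u i : Ω → ℝ) =ᵐ[μ] fun ω => if u < m i then a i * P i (m i - u) ω else 0 := by
      intro i
      by_cases h : u < m i
      · simp only [hVdef, dif_pos h]
        filter_upwards [Lp.coeFn_smul (a i)
            ((hP2 i (m i - u) (by omega) (by omega)).toLp (P i (m i - u))),
          (hP2 i (m i - u) (by omega) (by omega)).coeFn_toLp] with ω hw1 hw2
        rw [hw1, Pi.smul_apply, hw2, if_pos h, smul_eq_mul]
      · simp only [hVdef, dif_neg h]
        filter_upwards [Lp.coeFn_zero (E := ℝ) (p := 2) (μ := μ)] with ω hw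
        rw [hw, if_neg h, Pi.zero_apply]
    have hall : ∀ᵐ ω ∂μ, ∀ i : Fin n,
        (V u i : Ω → ℝ) ω = if u < m i then a i * P i (m i - u) ω else 0 :=
      ae_all_iff.mpr h2
    filter_upwards [Lp_coeFn_finset_sum' Finset.univ (V u), hall] with ω hw1 hw2
    rw [hw1]
    exact (Finset.sum_congr rfl fun i _ => (hw2 i).symm)
  -- decomposition of the centered sum
  have hdecomp : (fun ω => ∑ i, a i * (ξ i ω - ∫ ω', ξ i ω' ∂μ))
      =ᵐ[μ] fun ω => ∑ u ∈ Finset.range M, g u ω := by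
    have hxi : ∀ i : Fin n, ∀ᵐ ω ∂μ,
        ξ i ω - ∫ ω', ξ i ω' ∂μ = ∑ j ∈ Finset.range (m i), P i (j+1) ω := by
      intro i
      have hm_eq : μ[ξ i|ℱ (m i)] = ξ i :=
        condExp_of_stronglyMeasurable (ℱ.le _) (hmeas i) (hint i)
      filter_upwards [hinit i] with ω h0
      have htel : ∑ j ∈ Finset.range (m i), P i (j+1) ω
          = (μ[ξ i|ℱ (m i)]) ω - (μ[ξ i|ℱ 0]) ω := by
        have := Finset.sum_range_sub (fun j => (μ[ξ i|ℱ j]) ω) (m i)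
        simpa [hPdef] using this
      rw [htel, hm_eq, h0]
    have hall : ∀ᵐ ω ∂μ, ∀ i : Fin n,
        ξ i ω - ∫ ω', ξ i ω' ∂μ = ∑ j ∈ Finset.range (m i), P i (j+1) ω :=
      ae_all_iff.mpr hxi
    filter_upwards [hall] with ω hw
    have key : ∀ i : Fin n,
        (∑ u ∈ Finset.range M, if u < m i then a i * P i (m i - u) ω else 0)
          = a i * ∑ j ∈ Finset.range (m i), P i (j+1) ω := by
      intro i
      have hsub : Finset.range (m i) ⊆ Finset.range M :=
        Finset.range_subset_range.mpr (hmM i)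
      rw [← Finset.sum_subset hsub (fun x _ hx => if_neg (by simpa using hx))]
      have h1 : (∑ u ∈ Finset.range (m i), if u < m i then a i * P i (m i - u) ω else 0)
          = ∑ u ∈ Finset.range (m i), a i * P i (m i - u) ω :=
        Finset.sum_congr rfl fun u hu => if_pos (Finset.mem_range.mp hu)
      have h2 := Finset.sum_range_reflect (fun j => a i * P i (j+1) ω) (m i)
      have h3 : (∑ u ∈ Finset.range (m i), a i * P i (m i - u) ω)
          = ∑ u ∈ Finset.range (m i), a i * P i (m i - 1 - u + 1) ω := by
        refine Finset.sum_congr rfl fun u hu => ?_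
        have := Finset.mem_range.mp hu
        congr 2
        omega
      rw [h1, h3, h2, Finset.mul_sum]
    calc ∑ i, a i * (ξ i ω - ∫ ω', ξ i ω' ∂μ)
        = ∑ i, a i * ∑ j ∈ Finset.range (m i), P i (j+1) ω :=
          Finset.sum_congr rfl fun i _ => by rw [hw i]
      _ = ∑ i, ∑ u ∈ Finset.range M, (if u < m i then a i * P i (m i - u) ω else 0) :=
          Finset.sum_congr rfl fun i _ => (key i).symm
      _ = ∑ u ∈ Finset.range M, g u ω := by
          rw [Finset.sum_comm]
  -- per-lag bound
  have hbound : ∀ u : ℕ, eLpNorm (g u) 2 μ ≤ ENNReal.ofReal (Real.sqrt S * δ u) := by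
    intro u
    have hVnorm : ∀ i, ‖V u i‖ ≤ |a i| * δ u := by
      intro i
      by_cases h : u < m i
      · simp only [hVdef, dif_pos h]
        rw [norm_smul, Real.norm_eq_abs, Lp.norm_toLp]
        refine mul_le_mul_of_nonneg_left ?_ (abs_nonneg _)
        have h1 := hproj i (m i - u) (by omega) (by omega)
        have h2 : m i - (m i - u) = u := by omega
        rw [h2] at h1
        exact ENNReal.toReal_le_of_le_ofReal (hδ0 u) h1
      · simp only [hVdef, dif_neg h, norm_zero]
        exact mul_nonneg (abs_nonneg _) (hδ0 u)
    have horth : ∀ i i' : Fin n, i ≠ i' → ⟪V u i, V u i'⟫ = (0:ℝ) := by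
      intro i i' hne
      by_cases h : u < m i
      swap
      · simp [hVdef, dif_neg h]
      by_cases h' : u < m i'
      swap
      · simp [hVdef, dif_pos h, dif_neg h']
      simp only [hVdef, dif_pos h, dif_pos h']
      rw [real_inner_smul_left, real_inner_smul_right,
        inner_toLp_eq_integral' (hP2 i (m i - u) (by omega) (by omega))
          (hP2 i' (m i' - u) (by omega) (by omega))]
      have hne' : m i - u ≠ m i' - u := by
        intro hc
        exact hne (hm_inj (by omega))
      rcases lt_or_gt_of_ne hne' with hlt | hgt
      · rw [show (∫ ω, P i (m i - u) ω * P i' (m i' - u) ω ∂μ) = 0 from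
          orth_aux' ℱ hlt (hP2 i (m i - u) (by omega) (by omega))
            (hP2 i' (m i' - u) (by omega) (by omega))]
        ring
      · have hcomm : (∫ ω, P i (m i - u) ω * P i' (m i' - u) ω ∂μ)
            = ∫ ω, P i' (m i' - u) ω * P i (m i - u) ω ∂μ := by
          simp_rw [mul_comm]
        rw [hcomm, show (∫ ω, P i' (m i' - u) ω * P i (m i - u) ω ∂μ) = 0 from
          orth_aux' ℱ hgt (hP2 i' (m i' - u) (by omega) (by omega))
            (hP2 i (m i - u) (by omega) (by omega))]
        ring
    have hpyth : ‖∑ i, V u i‖ ^ 2 = ∑ i, ‖V u i‖ ^ 2 := by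
      rw [← real_inner_self_eq_norm_sq, sum_inner]
      refine Finset.sum_congr rfl fun i _ => ?_
      rw [inner_sum, Finset.sum_eq_single i
        (fun b _ hb => horth i b (fun hc => hb hc.symm))
        (fun hni => absurd (Finset.mem_univ i) hni)]
      exact real_inner_self_eq_norm_sq _
    have hnorm_le : ‖∑ i, V u i‖ ≤ Real.sqrt S * δ u := by
      have h1 : ‖∑ i, V u i‖ ^ 2 ≤ S * δ u ^ 2 := by
        rw [hpyth]
        calc ∑ i, ‖V u i‖ ^ 2 ≤ ∑ i, (|a i| * δ u) ^ 2 :=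
              Finset.sum_le_sum fun i _ => pow_le_pow_left₀ (norm_nonneg _) (hVnorm i) 2
          _ = ∑ i, (a i) ^ 2 * δ u ^ 2 := by
              refine Finset.sum_congr rfl fun i _ => ?_
              rw [mul_pow, sq_abs]
          _ = S * δ u ^ 2 := by rw [hS, Finset.sum_mul]
      calc ‖∑ i, V u i‖ = Real.sqrt (‖∑ i, V u i‖ ^ 2) :=
            (Real.sqrt_sq (norm_nonneg _)).symm
        _ ≤ Real.sqrt (S * δ u ^ 2) := Real.sqrt_le_sqrt h1
        _ = Real.sqrt S * δ u := by
            rw [Real.sqrt_mul hS0, Real.sqrt_sq (hδ0 u)]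
    calc eLpNorm (g u) 2 μ = eLpNorm ((∑ i, V u i : Lp ℝ 2 μ) : Ω → ℝ) 2 μ :=
          eLpNorm_congr_ae (hgV u)
      _ = ENNReal.ofReal ‖∑ i, V u i‖ := by
          rw [Lp.norm_def, ENNReal.ofReal_toReal (Lp.eLpNorm_ne_top _)]
      _ ≤ ENNReal.ofReal (Real.sqrt S * δ u) := ENNReal.ofReal_le_ofReal hnorm_le
  -- assemble
  have hgmeas : ∀ u ∈ Finset.range M, AEStronglyMeasurable (g u) μ := fun u _ =>
    (Lp.aestronglyMeasurable (∑ i, V u i)).congr (hgV u).symm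
  calc eLpNorm (fun ω => ∑ i, a i * (ξ i ω - ∫ ω', ξ i ω' ∂μ)) 2 μ
      = eLpNorm (fun ω => ∑ u ∈ Finset.range M, g u ω) 2 μ := eLpNorm_congr_ae hdecomp
    _ ≤ ∑ u ∈ Finset.range M, eLpNorm (g u) 2 μ := by
        have h := eLpNorm_sum_le (μ := μ) (s := Finset.range M) hgmeas one_le_two
        have heq : (∑ u ∈ Finset.range M, g u) = fun ω => ∑ u ∈ Finset.range M, g u ω := by
          ext ω; simp [Finset.sum_apply]
        rwa [heq] at h
    _ ≤ ∑ u ∈ Finset.range M, ENNReal.ofReal (Real.sqrt S * δ u) :=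
        Finset.sum_le_sum fun u _ => hbound u
    _ = ENNReal.ofReal (∑ u ∈ Finset.range M, Real.sqrt S * δ u) :=
        (ENNReal.ofReal_sum_of_nonneg fun u _ =>
          mul_nonneg (Real.sqrt_nonneg _) (hδ0 u)).symm
    _ = ENNReal.ofReal (Real.sqrt S * ∑ u ∈ Finset.range M, δ u) := by
        rw [← Finset.mul_sum]
    _ ≤ ENNReal.ofReal (Real.sqrt S * ∑' u, δ u) :=
        ENNReal.ofReal_le_ofReal (mul_le_mul_of_nonneg_left
          (Summable.sum_le_tsum _ (fun u _ => hδ0 u) hδsum) (Real.sqrt_nonneg _))
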